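/- Let f : ℝ^m → ℝ be continuous, equal to |u|²/2 outside a compact set, and f(u) ≥ 0 pointwise with f not convex. Let Ψ(u) = sup{L(u) : L affine, L ≤ f} be its convex envelope. Then there exist a point u₀ with Ψ(u₀) < f(u₀) and an affine function L ≤ f with L(u₀) = Ψ(u₀) such that equality L(u) = f(u) holds for at least two distinct points u. -/
import Mathlib
set_option maxHeartbeats 2000000

open Set

/-- If `f ≥ 0` is continuous, equals `|u|²/2` outside a compact set, and is not
convex, then its convex envelope `Ψ` (supremum of affine minorants) lies strictly
below `f` at some point `u₀`, the supremum is attained there by an affine minorant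
`L`, and `L` touches `f` in at least two distinct points. -/
theorem stmt_9 {m : ℕ} (f : EuclideanSpace ℝ (Fin m) → ℝ)
    (hf : Continuous f)
    (K : Set (EuclideanSpace ℝ (Fin m))) (hK : IsCompact K)
    (hout : ∀ u ∉ K, f u = ‖u‖ ^ 2 / 2)
    (hfpos : ∀ u, 0 ≤ f u)
    (hnotconvex : ¬ ConvexOn ℝ Set.univ f)
    (Ψ : EuclideanSpace ℝ (Fin m) → ℝ)
    (hΨ : ∀ u, Ψ u = sSup {y | ∃ L : EuclideanSpace ℝ (Fin m) →ᵃ[ℝ] ℝ,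
        (∀ v, L v ≤ f v) ∧ y = L u}) :
    ∃ u₀ : EuclideanSpace ℝ (Fin m), Ψ u₀ < f u₀ ∧
      ∃ L : EuclideanSpace ℝ (Fin m) →ᵃ[ℝ] ℝ,
        (∀ v, L v ≤ f v) ∧ L u₀ = Ψ u₀ ∧
          ∃ u₁ u₂, u₁ ≠ u₂ ∧ L u₁ = f u₁ ∧ L u₂ = f u₂ := by
  classical
  have hS0 : ∀ u : EuclideanSpace ℝ (Fin m),
      (0 : ℝ) ∈ {y | ∃ L : EuclideanSpace ℝ (Fin m) →ᵃ[ℝ] ℝ,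
        (∀ v, L v ≤ f v) ∧ y = L u} := by
    intro u
    exact ⟨AffineMap.const ℝ (EuclideanSpace ℝ (Fin m)) (0 : ℝ),
      fun v => by simpa using hfpos v, by simp⟩
  have hbdd : ∀ u : EuclideanSpace ℝ (Fin m),
      BddAbove {y | ∃ L : EuclideanSpace ℝ (Fin m) →ᵃ[ℝ] ℝ,
        (∀ v, L v ≤ f v) ∧ y = L u} := by
    intro u
    refine ⟨f u, ?_⟩
    rintro y ⟨L, hL, rfl⟩
    exact hL u
  have hle : ∀ L : EuclideanSpace ℝ (Fin m) →ᵃ[ℝ] ℝ, (∀ v, L v ≤ f v) →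
      ∀ u, L u ≤ Ψ u := by
    intro L hL u
    rw [hΨ]
    exact le_csSup (hbdd u) ⟨L, hL, rfl⟩
  have hΨf : ∀ u, Ψ u ≤ f u := by
    intro u
    rw [hΨ]
    refine csSup_le ⟨0, hS0 u⟩ ?_
    rintro y ⟨L, hL, rfl⟩
    exact hL u
  -- Ψ is convex
  have hΨconv : ConvexOn ℝ univ Ψ := by
    refine ⟨convex_univ, fun x _ y _ a b ha hb hab => ?_⟩
    rw [hΨ (a • x + b • y)]
    refine csSup_le ⟨0, hS0 _⟩ ?_
    rintro z ⟨L, hL, rfl⟩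
    have h1 : L (a • x + b • y) = a * L x + b * L y := by
      rw [Convex.combo_affine_apply hab]; simp
    have h2 := hle L hL x
    have h3 := hle L hL y
    simp only [smul_eq_mul]
    nlinarith
  -- a point where Ψ < f
  have hex : ∃ u₀ : EuclideanSpace ℝ (Fin m), Ψ u₀ < f u₀ := by
    by_contra h
    push_neg at h
    have hfe : Ψ = f := funext fun u => le_antisymm (hΨf u) (h u)
    exact hnotconvex (hfe ▸ hΨconv)
  obtain ⟨u₀, hu₀⟩ := hex
  refine ⟨u₀, hu₀, ?_⟩
  -- separate (u₀, Ψ u₀) from the interior of the epigraph of Ψ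
  set epi : Set ((EuclideanSpace ℝ (Fin m)) × ℝ) := {p | Ψ p.1 ≤ p.2} with hepi
  have hepiconv : Convex ℝ epi := by
    have := hΨconv.convex_epigraph
    simpa using this
  have hO : {p : (EuclideanSpace ℝ (Fin m)) × ℝ | f p.1 < p.2} ⊆ interior epi := by
    refine interior_maximal ?_ (isOpen_lt (hf.comp continuous_fst) continuous_snd)
    intro p hp
    exact le_trans (hΨf p.1) (le_of_lt hp)
  have hnotint : ((u₀, Ψ u₀) : (EuclideanSpace ℝ (Fin m)) × ℝ) ∉ interior epi := by
    intro hmem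
    rw [mem_interior_iff_mem_nhds, Metric.mem_nhds_iff] at hmem
    obtain ⟨ε, hε, hball⟩ := hmem
    have hd2 : dist (Ψ u₀ - ε/2) (Ψ u₀) = ε/2 := by
      rw [Real.dist_eq]
      have h : Ψ u₀ - ε/2 - Ψ u₀ = -(ε/2) := by ring
      rw [h, abs_neg, abs_of_nonneg (by linarith)]
    have hb : ((u₀, Ψ u₀ - ε/2) : (EuclideanSpace ℝ (Fin m)) × ℝ) ∈
        Metric.ball ((u₀, Ψ u₀) : (EuclideanSpace ℝ (Fin m)) × ℝ) ε := by
      rw [Metric.mem_ball, Prod.dist_eq, hd2, dist_self]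
      rw [max_eq_right (by linarith)]
      linarith
    have h2 := hball hb
    simp only [hepi, mem_setOf_eq] at h2
    linarith
  obtain ⟨φ, hφ⟩ :=
    geometric_hahn_banach_open_point (Convex.interior hepiconv) isOpen_interior hnotint
  set g : (EuclideanSpace ℝ (Fin m)) →L[ℝ] ℝ :=
    φ.comp (ContinuousLinearMap.inl ℝ (EuclideanSpace ℝ (Fin m)) ℝ) with hgdef
  set c : ℝ := φ (0, 1) with hcdef
  have hsplit : ∀ (x : EuclideanSpace ℝ (Fin m)) (t : ℝ), φ (x, t) = g x + c * t := by
    intro x t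
    have h : ((x, t) : (EuclideanSpace ℝ (Fin m)) × ℝ)
        = (x, 0) + t • ((0 : EuclideanSpace ℝ (Fin m)), (1 : ℝ)) := by
      simp [Prod.ext_iff]
    rw [h, map_add, map_smul]
    simp [hgdef, hcdef, mul_comm]
  have hkey : ∀ (x : EuclideanSpace ℝ (Fin m)) (t : ℝ), f x < t →
      g x + c * t < g u₀ + c * Ψ u₀ := by
    intro x t ht
    have h := hφ (x, t) (hO ht)
    rwa [hsplit, hsplit] at h
  have hc : c < 0 := by
    have h1 := hkey u₀ (f u₀ + 1) (by linarith)
    have h2 : Ψ u₀ ≤ f u₀ := hΨf u₀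
    nlinarith
  set d : ℝ := -c with hd
  have hdpos : 0 < d := by rw [hd]; linarith
  -- the supporting affine function L
  set L : (EuclideanSpace ℝ (Fin m)) →ᵃ[ℝ] ℝ :=
    { toFun := fun v => Ψ u₀ + (g v - g u₀)/d,
      linear := d⁻¹ • (g : (EuclideanSpace ℝ (Fin m)) →ₗ[ℝ] ℝ),
      map_vadd' := by intro p v; simp [div_eq_inv_mul]; ring } with hLdef
  have hLfun : ∀ v, L v = Ψ u₀ + (g v - g u₀)/d := fun v => rfl
  have hLu₀ : L u₀ = Ψ u₀ := by rw [hLfun]; simp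
  have hLf : ∀ v, L v ≤ f v := by
    intro v
    by_contra hlt
    push_neg at hlt
    have h1 : f v < (f v + L v)/2 := by linarith
    have h2 := hkey v ((f v + L v)/2) h1
    rw [hLfun] at hlt h2
    have h3 : (g v - g u₀)/d * d = g v - g u₀ := div_mul_cancel₀ _ (ne_of_gt hdpos)
    have hcd : c = -d := by rw [hd]; ring
    rw [hcd] at h2
    nlinarith
  refine ⟨L, hLf, hLu₀, ?_⟩
  have hLcont : Continuous fun v : EuclideanSpace ℝ (Fin m) => L v := by
    simp only [hLfun]
    exact continuous_const.add (((g.continuous).sub continuous_const).div_const d)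
  -- the contact set
  set T : Set (EuclideanSpace ℝ (Fin m)) := {v | L v = f v} with hTdef
  -- main claim : u₀ lies in the closed convex hull of T
  have hclaim : u₀ ∈ closure (convexHull ℝ T) := by
    by_contra hnot
    obtain ⟨g₂, δ, hg₂, hδ⟩ :=
      geometric_hahn_banach_closed_point ((convex_convexHull ℝ T).closure) isClosed_closure hnot
    obtain ⟨R₀, hR₀⟩ : ∃ R₀, K ⊆ Metric.closedBall 0 R₀ := hK.isBounded.subset_closedBall 0
    obtain ⟨M, hM1, hMb⟩ : ∃ M : ℝ, 1 ≤ M ∧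
        ∀ v : EuclideanSpace ℝ (Fin m), g₂ v - δ + L v ≤ M * (1 + ‖v‖) := by
      set M : ℝ := ‖g₂‖ + |δ| + |Ψ u₀| + (‖g‖ + |g u₀|)/d + 1 with hM
      have hM1 : 1 ≤ M := by
        have h1 : (0:ℝ) ≤ ‖g₂‖ := norm_nonneg _
        have h2 : (0:ℝ) ≤ |δ| := abs_nonneg _
        have h3 : (0:ℝ) ≤ |Ψ u₀| := abs_nonneg _
        have h4 : (0:ℝ) ≤ (‖g‖ + |g u₀|)/d := div_nonneg (by positivity) hdpos.le
        rw [hM]; linarith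
      refine ⟨M, hM1, ?_⟩
      intro v
      have h1 : g₂ v ≤ ‖g₂‖ * ‖v‖ :=
        (le_abs_self _).trans (by simpa [Real.norm_eq_abs] using g₂.le_opNorm v)
      have h2 : g v ≤ ‖g‖ * ‖v‖ :=
        (le_abs_self _).trans (by simpa [Real.norm_eq_abs] using g.le_opNorm v)
      have h3 : (g v - g u₀)/d ≤ ((‖g‖ + |g u₀|)/d) * (1 + ‖v‖) := by
        rw [div_mul_eq_mul_div, div_le_div_iff_of_pos_right hdpos]
        nlinarith [neg_abs_le (g u₀), norm_nonneg v, norm_nonneg g, abs_nonneg (g u₀)]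
      rw [hLfun]
      have hM' : M * (1 + ‖v‖) = ‖g₂‖ * (1+‖v‖) + |δ| * (1+‖v‖) + |Ψ u₀| * (1+‖v‖)
          + ((‖g‖ + |g u₀|)/d) * (1+‖v‖) + (1+‖v‖) := by rw [hM]; ring
      rw [hM']
      nlinarith [le_abs_self (Ψ u₀), neg_abs_le δ, norm_nonneg v, norm_nonneg g₂,
        abs_nonneg δ, abs_nonneg (Ψ u₀)]
    set R : ℝ := max (R₀ + 1) (4*M + 1) with hR
    have hRM : 4*M + 1 ≤ R := le_max_right _ _
    have houts : ∀ v : EuclideanSpace ℝ (Fin m), R < ‖v‖ →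
        g₂ v - δ + L v ≤ ‖v‖^2/2 ∧ f v = ‖v‖^2/2 := by
      intro v hv
      have hvK : v ∉ K := by
        intro hvK
        have h := hR₀ hvK
        rw [Metric.mem_closedBall, dist_zero_right] at h
        have h2 : R₀ + 1 ≤ R := le_max_left _ _
        linarith
      refine ⟨?_, hout v hvK⟩
      have h1 := hMb v
      have h2 : M * (1 + ‖v‖) ≤ ‖v‖^2/2 := by
        have hv1 : (1:ℝ) ≤ ‖v‖ := by linarith
        have ha : (4*M+1) * ‖v‖ ≤ ‖v‖ * ‖v‖ :=
          mul_le_mul_of_nonneg_right (by linarith) (norm_nonneg v)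
        have hbb : M * 1 ≤ M * ‖v‖ := mul_le_mul_of_nonneg_left hv1 (by linarith)
        have hsq : ‖v‖^2 = ‖v‖ * ‖v‖ := sq ‖v‖
        nlinarith
      linarith
    set C' : Set (EuclideanSpace ℝ (Fin m)) :=
      Metric.closedBall (0 : EuclideanSpace ℝ (Fin m)) R ∩ {v | δ ≤ g₂ v} with hC'
    have hC'comp : IsCompact C' :=
      (isCompact_closedBall _ _).inter_right (isClosed_le continuous_const g₂.continuous)
    have hhC' : ∀ v ∈ C', 0 < f v - L v := by
      intro v hv
      rcases (hLf v).lt_or_eq with h | h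
      · linarith
      · exfalso
        have hvT : v ∈ T := h
        have := hg₂ v (subset_closure (subset_convexHull ℝ T hvT))
        exact absurd hv.2 (not_le.mpr this)
    -- improving L leads to a contradiction
    have hfinal : ∀ ε : ℝ, 0 < ε →
        (∀ v, ε * (g₂ v - δ) ≤ f v - L v) → False := by
      intro ε hεpos htilt
      set L' : (EuclideanSpace ℝ (Fin m)) →ᵃ[ℝ] ℝ :=
        { toFun := fun v => L v + ε * (g₂ v - δ),
          linear := L.linear + ε • (g₂ : (EuclideanSpace ℝ (Fin m)) →ₗ[ℝ] ℝ),
          map_vadd' := by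
            intro p v
            have h := L.map_vadd p v
            simp only [vadd_eq_add] at h ⊢
            simp [h]; ring } with hL'def
      have hL'f : ∀ v, L' v ≤ f v := by
        intro v
        have := htilt v
        show L v + ε * (g₂ v - δ) ≤ f v
        linarith
      have h1 : L' u₀ ≤ Ψ u₀ := hle L' hL'f u₀
      have h2 : L' u₀ = Ψ u₀ + ε * (g₂ u₀ - δ) := by
        show L u₀ + ε * (g₂ u₀ - δ) = _
        rw [hLu₀]
      nlinarith [mul_pos hεpos (by linarith : (0:ℝ) < g₂ u₀ - δ)]
    rcases eq_empty_or_nonempty C' with hCe | hCne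
    · apply hfinal 1 one_pos
      intro v
      rcases le_or_gt (g₂ v) δ with hvg | hvg
      · have := hLf v; nlinarith
      · have hvR : R < ‖v‖ := by
          by_contra hvR
          push_neg at hvR
          have hvC : v ∈ C' :=
            ⟨Metric.mem_closedBall.mpr (by rwa [dist_zero_right]), le_of_lt hvg⟩
          rw [hCe] at hvC
          exact hvC
        obtain ⟨hb, hfv⟩ := houts v hvR
        rw [hfv]; linarith
    · obtain ⟨w, hwC, hwmin⟩ := hC'comp.exists_isMinOn hCne
        ((hf.sub hLcont).continuousOn)
      have hηpos : 0 < f w - L w := hhC' w hwC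
      set M₃ : ℝ := ‖g₂‖ * R + |δ| + 1 with hM₃
      have hRnn : (0:ℝ) ≤ R := by linarith
      have hM₃pos : 0 < M₃ := by positivity
      set ε : ℝ := min 1 ((f w - L w) / M₃) with hε
      have hεpos : 0 < ε := lt_min one_pos (div_pos hηpos hM₃pos)
      apply hfinal ε hεpos
      intro v
      rcases le_or_gt (g₂ v) δ with hvg | hvg
      · have h0 := hLf v
        have h1 : ε * (g₂ v - δ) ≤ 0 :=
          mul_nonpos_of_nonneg_of_nonpos hεpos.le (by linarith)
        linarith
      · rcases le_or_gt ‖v‖ R with hvR | hvR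
        · have hvC : v ∈ C' :=
            ⟨Metric.mem_closedBall.mpr (by rwa [dist_zero_right]), hvg.le⟩
          have hmin : f w - L w ≤ f v - L v := isMinOn_iff.mp hwmin v hvC
          have hgv : g₂ v ≤ ‖g₂‖ * ‖v‖ :=
            (le_abs_self _).trans (by simpa [Real.norm_eq_abs] using g₂.le_opNorm v)
          have hub : g₂ v - δ ≤ M₃ := by
            have h1 : ‖g₂‖ * ‖v‖ ≤ ‖g₂‖ * R := mul_le_mul_of_nonneg_left hvR (norm_nonneg _)
            have h2 := neg_abs_le δ
            rw [hM₃]; linarith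
          have hεM : ε ≤ (f w - L w) / M₃ := min_le_right _ _
          have h3 : ε * (g₂ v - δ) ≤ ((f w - L w)/M₃) * M₃ :=
            mul_le_mul hεM hub (by linarith) (by positivity)
          rw [div_mul_cancel₀ _ (ne_of_gt hM₃pos)] at h3
          linarith
        · obtain ⟨hb, hfv⟩ := houts v hvR
          have hε1 : ε ≤ 1 := min_le_left _ _
          have h3 : ε * (g₂ v - δ) ≤ 1 * (g₂ v - δ) :=
            mul_le_mul_of_nonneg_right hε1 (by linarith)
          rw [hfv]; linarith
  -- finish: extract two contact points
  have hu₀T : u₀ ∉ T := by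
    intro h
    rw [hTdef, mem_setOf_eq, hLu₀] at h
    linarith
  have hTne : T.Nonempty := by
    by_contra h
    rw [not_nonempty_iff_eq_empty] at h
    rw [h] at hclaim
    simp at hclaim
  obtain ⟨u₁, hu₁⟩ := hTne
  have h2pt : ∃ u₂ ∈ T, u₂ ≠ u₁ := by
    by_contra h
    push_neg at h
    have hTsub : T ⊆ {u₁} := fun v hv => h v hv
    have hcl : closure (convexHull ℝ T) ⊆ {u₁} := by
      refine closure_minimal ?_ isClosed_singleton
      have h2 : convexHull ℝ T ⊆ convexHull ℝ {u₁} := convexHull_mono hTsub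
      rwa [convexHull_singleton] at h2
    have h3 := hcl hclaim
    rw [mem_singleton_iff] at h3
    exact hu₀T (h3 ▸ hu₁)
  obtain ⟨u₂, hu₂T, hne⟩ := h2pt
  exact ⟨u₁, u₂, fun h => hne h.symm, hu₁, hu₂T⟩
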